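/- The function Ξ(φ) := −arccos( (1/√2) · (4 − 3√2 cos φ)/(3 − 2√2 cos φ) ) is strictly increasing and concave on (0, π/2), with dΞ/dφ = 1/(3 − 2√2 cos φ) and d²Ξ/dφ² = −2√2 sin φ/(3 − 2√2 cos φ)² < 0. -/

import Mathlib

open Real Set

noncomputable section

/-- `Ξ(φ) = −arccos((1/√2)(4 − 3√2 cos φ)/(3 − 2√2 cos φ))`. -/
def Xi (φ : ℝ) : ℝ :=
  - Real.arccos ((1 / Real.sqrt 2) *
    (4 - 3 * Real.sqrt 2 * Real.cos φ) / (3 - 2 * Real.sqrt 2 * Real.cos φ))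

lemma denom_pos (ψ : ℝ) : 0 < 3 - 2 * Real.sqrt 2 * Real.cos ψ := by
  nlinarith [Real.sq_sqrt (by norm_num : (2:ℝ) ≥ 0), Real.sqrt_nonneg 2,
    Real.cos_le_one ψ, Real.neg_one_le_cos ψ, sq_nonneg (Real.sqrt 2 - 3/2)]

lemma Xi_hasDerivAt {φ : ℝ} (hs : 0 < Real.sin φ) :
    HasDerivAt Xi (1 / (3 - 2 * Real.sqrt 2 * Real.cos φ)) φ := by
  set c := Real.cos φ with hc
  set s := Real.sin φ with hsdef
  have hD : 0 < 3 - 2 * Real.sqrt 2 * c := denom_pos φ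
  have h2 : Real.sqrt 2 ^ 2 = 2 := Real.sq_sqrt (by norm_num)
  have hsq : Real.sqrt 2 > 0 := Real.sqrt_pos.mpr (by norm_num)
  set g : ℝ := (1 / Real.sqrt 2) * (4 - 3 * Real.sqrt 2 * c) / (3 - 2 * Real.sqrt 2 * c)
    with hg
  have hpyth : s ^ 2 + c ^ 2 = 1 := Real.sin_sq_add_cos_sq φ
  -- 1 - g^2 = (s / D)^2
  have key : 2 * (3 - 2*Real.sqrt 2*c)^2 - (4 - 3*Real.sqrt 2*c)^2 = 2*s^2 := by
    linear_combination (-c^2) * h2 - 2 * hpyth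
  have hkey : 1 - g ^ 2 = (s / (3 - 2 * Real.sqrt 2 * c)) ^ 2 := by
    rw [hg]
    field_simp [hD.ne']
    have hD2 : (3 - Real.sqrt 2 * c * 2) ≠ 0 := by linarith
    field_simp
    linear_combination ((3 - 2*Real.sqrt 2*c)^2 - s^2) * h2 + key
  have hsD : 0 < s / (3 - 2 * Real.sqrt 2 * c) := div_pos hs hD
  have hg2 : g ^ 2 < 1 := by nlinarith [sq_nonneg (s / (3 - 2 * Real.sqrt 2 * c))]
  have hne1 : g ≠ 1 := by intro h; rw [h] at hg2; norm_num at hg2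
  have hnem1 : g ≠ -1 := by intro h; rw [h] at hg2; norm_num at hg2
  -- derivative of inner function
  have h1 : HasDerivAt (fun ψ => (1 / Real.sqrt 2) * (4 - 3 * Real.sqrt 2 * Real.cos ψ))
      ((1 / Real.sqrt 2) * (3 * Real.sqrt 2 * s)) φ := by
    have := ((Real.hasDerivAt_cos φ).const_mul (3 * Real.sqrt 2)).const_sub 4
    have := this.const_mul (1 / Real.sqrt 2)
    refine this.congr_deriv ?_
    ring
  have h2' : HasDerivAt (fun ψ => 3 - 2 * Real.sqrt 2 * Real.cos ψ)
      (2 * Real.sqrt 2 * s) φ := by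
    have := ((Real.hasDerivAt_cos φ).const_mul (2 * Real.sqrt 2)).const_sub 3
    refine this.congr_deriv ?_
    ring
  have hinner : HasDerivAt
      (fun ψ => (1 / Real.sqrt 2) * (4 - 3 * Real.sqrt 2 * Real.cos ψ) /
        (3 - 2 * Real.sqrt 2 * Real.cos ψ))
      (s / (3 - 2 * Real.sqrt 2 * c) ^ 2) φ := by
    have h := h1.div h2' hD.ne'
    refine h.congr_deriv ?_
    field_simp
    ring
  have ha := Real.hasDerivAt_arccos hnem1 hne1
  have hcomp := (ha.comp φ hinner).neg
  have : Xi = fun ψ => - Real.arccos ((fun ψ => (1 / Real.sqrt 2) *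
      (4 - 3 * Real.sqrt 2 * Real.cos ψ) / (3 - 2 * Real.sqrt 2 * Real.cos ψ)) ψ) := rfl
  rw [this]
  refine hcomp.congr_deriv ?_
  rw [hkey, Real.sqrt_sq hsD.le]
  field_simp

lemma deriv2_hasDerivAt (φ : ℝ) :
    HasDerivAt (fun ψ => 1 / (3 - 2 * Real.sqrt 2 * Real.cos ψ))
      (-(2 * Real.sqrt 2 * Real.sin φ) / (3 - 2 * Real.sqrt 2 * Real.cos φ) ^ 2) φ := by
  have hD := denom_pos φ
  have h2' : HasDerivAt (fun ψ => 3 - 2 * Real.sqrt 2 * Real.cos ψ)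
      (2 * Real.sqrt 2 * Real.sin φ) φ := by
    have := ((Real.hasDerivAt_cos φ).const_mul (2 * Real.sqrt 2)).const_sub 3
    refine this.congr_deriv ?_
    ring
  have h := (hasDerivAt_const φ (1:ℝ)).div h2' hD.ne'
  refine h.congr_deriv ?_
  field_simp
  ring

/-- `Ξ` is strictly increasing and concave on `(0, π/2)`, with
`Ξ' (φ) = 1/(3 − 2√2 cos φ)` and `Ξ''(φ) = −2√2 sin φ/(3 − 2√2 cos φ)² < 0`. -/
theorem Xi_strictMono_concave :
    StrictMonoOn Xi (Ioo 0 (π / 2)) ∧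
    StrictConcaveOn ℝ (Ioo 0 (π / 2)) Xi ∧
    ∀ φ ∈ Ioo 0 (π / 2),
      HasDerivAt Xi (1 / (3 - 2 * Real.sqrt 2 * Real.cos φ)) φ ∧
      HasDerivAt (fun ψ => 1 / (3 - 2 * Real.sqrt 2 * Real.cos ψ))
        (-(2 * Real.sqrt 2 * Real.sin φ) / (3 - 2 * Real.sqrt 2 * Real.cos φ) ^ 2) φ ∧
      -(2 * Real.sqrt 2 * Real.sin φ) / (3 - 2 * Real.sqrt 2 * Real.cos φ) ^ 2 < 0 := by
  have hsin : ∀ φ ∈ Ioo 0 (π / 2), 0 < Real.sin φ := fun φ hφ =>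
    Real.sin_pos_of_pos_of_lt_pi hφ.1 (hφ.2.trans (by linarith [Real.pi_pos]))
  have hd1 : ∀ φ ∈ Ioo 0 (π / 2),
      HasDerivAt Xi (1 / (3 - 2 * Real.sqrt 2 * Real.cos φ)) φ :=
    fun φ hφ => Xi_hasDerivAt (hsin φ hφ)
  have hneg : ∀ φ ∈ Ioo 0 (π / 2),
      -(2 * Real.sqrt 2 * Real.sin φ) / (3 - 2 * Real.sqrt 2 * Real.cos φ) ^ 2 < 0 := by
    intro φ hφ
    apply div_neg_of_neg_of_pos
    · have := hsin φ hφ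
      have : 0 < 2 * Real.sqrt 2 * Real.sin φ :=
        mul_pos (by positivity) this
      linarith
    · exact pow_pos (denom_pos φ) 2
  have hcont : ContinuousOn Xi (Ioo 0 (π / 2)) := fun x hx =>
    (hd1 x hx).continuousAt.continuousWithinAt
  have hderivXi : ∀ φ ∈ Ioo 0 (π / 2),
      deriv Xi φ = 1 / (3 - 2 * Real.sqrt 2 * Real.cos φ) :=
    fun φ hφ => (hd1 φ hφ).deriv
  refine ⟨?_, ?_, fun φ hφ => ⟨hd1 φ hφ, deriv2_hasDerivAt φ, hneg φ hφ⟩⟩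
  · apply strictMonoOn_of_deriv_pos (convex_Ioo _ _) hcont
    intro x hx
    rw [interior_Ioo] at hx
    rw [hderivXi x hx]
    exact one_div_pos.mpr (denom_pos x)
  · apply strictConcaveOn_of_deriv2_neg (convex_Ioo _ _) hcont
    intro x hx
    rw [interior_Ioo] at hx
    have heq : deriv Xi =ᶠ[nhds x] fun ψ => 1 / (3 - 2 * Real.sqrt 2 * Real.cos ψ) := by
      filter_upwards [isOpen_Ioo.mem_nhds hx] with y hy
      exact hderivXi y hy
    have : deriv (deriv Xi) x = -(2 * Real.sqrt 2 * Real.sin x) /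
        (3 - 2 * Real.sqrt 2 * Real.cos x) ^ 2 := by
      rw [heq.deriv_eq]
      exact (deriv2_hasDerivAt x).deriv
    simp only [Function.iterate_succ, Function.iterate_zero, Function.comp_apply, id]
    rw [this]
    exact hneg x hx
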